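/- Let p ∈ ℝ[x_0,x_1,...,x_n] be a homogeneous real stable polynomial such that p(u) ≠ 0 for the first unit vector u = (1,0,...,0) ∈ ℝ^{n+1}. Then the dehomogenization q(x_1,...,x_n) = p(1,x_1,...,x_n) is a real zero polynomial. -/

import Mathlib

open Polynomial in
private lemma aux_eval_aeval {σ : Type*} (P : MvPolynomial σ ℂ)
    (g : σ → Polynomial ℂ) (t : ℂ) :
    (MvPolynomial.aeval g P).eval t
      = MvPolynomial.eval (fun i => (g i).eval t) P := by
  induction P using MvPolynomial.induction_on with
  | C a => simp [MvPolynomial.algebraMap_eq]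
  | add p q hp hq => simp [hp, hq]
  | mul_X p i hp => simp [hp]

private lemma aux_conj {σ : Type*} (p : MvPolynomial σ ℝ) (z : σ → ℂ) :
    MvPolynomial.eval (fun i => (starRingEnd ℂ) (z i)) (MvPolynomial.map (algebraMap ℝ ℂ) p)
      = (starRingEnd ℂ) (MvPolynomial.eval z (MvPolynomial.map (algebraMap ℝ ℂ) p)) := by
  induction p using MvPolynomial.induction_on with
  | C a => simp [Complex.conj_ofReal]
  | add p q hp hq => simp [hp, hq]
  | mul_X p i hp => simp [hp]

private lemma aux_real {σ : Type*} (p : MvPolynomial σ ℝ) (b : σ → ℝ) :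
    MvPolynomial.eval (fun i => ((b i : ℝ) : ℂ)) (MvPolynomial.map (algebraMap ℝ ℂ) p)
      = ((MvPolynomial.eval b p : ℝ) : ℂ) := by
  induction p using MvPolynomial.induction_on with
  | C a => simp
  | add p q hp hq => simp [hp, hq]
  | mul_X p i hp => simp [hp]

private lemma aux_degsum {σ : Type*} {d : ℕ} {P : MvPolynomial σ ℂ}
    (hP : P.IsHomogeneous d) {m : σ →₀ ℕ} (hm : m ∈ P.support) :
    ∑ i ∈ m.support, m i = d := by
  have h := hP (MvPolynomial.mem_support_iff.mp hm)
  simpa [Finsupp.weight_apply, Finsupp.sum] using h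

private lemma aux_eval_smul {σ : Type*} {d : ℕ} (P : MvPolynomial σ ℂ)
    (hP : P.IsHomogeneous d) (c : ℂ) (x : σ → ℂ) :
    MvPolynomial.eval (fun i => c * x i) P = c ^ d * MvPolynomial.eval x P := by
  conv_lhs => rw [P.as_sum]
  conv_rhs => rw [P.as_sum]
  rw [map_sum, map_sum, Finset.mul_sum]
  apply Finset.sum_congr rfl
  intro m hm
  rw [MvPolynomial.eval_monomial, MvPolynomial.eval_monomial, Finsupp.prod, Finsupp.prod]
  have hd := aux_degsum hP hm
  simp_rw [mul_pow]
  rw [Finset.prod_mul_distrib, Finset.prod_pow_eq_pow_sum, hd]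
  ring

open Polynomial in
private lemma aux_natdeg {σ : Type*} {d : ℕ} (P : MvPolynomial σ ℂ)
    (hP : P.IsHomogeneous d) (g : σ → Polynomial ℂ) (hg : ∀ i, (g i).natDegree ≤ 1) :
    (MvPolynomial.aeval g P).natDegree ≤ d := by
  conv_lhs => rw [P.as_sum]
  rw [map_sum]
  apply Polynomial.natDegree_sum_le_of_forall_le
  intro m hm
  rw [MvPolynomial.aeval_monomial, Polynomial.algebraMap_eq]
  refine (Polynomial.natDegree_C_mul_le _ _).trans ?_
  rw [Finsupp.prod]
  refine (Polynomial.natDegree_prod_le _ _).trans ?_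
  rw [← aux_degsum hP hm]
  apply Finset.sum_le_sum
  intro i _
  exact Polynomial.natDegree_pow_le.trans (by simpa using Nat.mul_le_mul_left (m i) (hg i))

open Polynomial in
private lemma aux_coeff_top {σ : Type*} {d : ℕ} (P : MvPolynomial σ ℂ)
    (hP : P.IsHomogeneous d) (x w : σ → ℂ) :
    (MvPolynomial.aeval
        (fun i => Polynomial.C (x i) + Polynomial.C (w i) * Polynomial.X) P).coeff d
      = MvPolynomial.eval w P := by
  have hg : ∀ j, ((Polynomial.C (x j) + Polynomial.C (w j) * Polynomial.X : ℂ[X])).natDegree ≤ 1 :=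
    fun j => (Polynomial.natDegree_add_le _ _).trans
      (max_le (by simp) ((Polynomial.natDegree_C_mul_le _ _).trans Polynomial.natDegree_X_le))
  have hg1 : ∀ j, ((Polynomial.C (x j) + Polynomial.C (w j) * Polynomial.X : ℂ[X])).coeff 1 = w j := by
    intro j
    simp [Polynomial.coeff_add, Polynomial.coeff_C]
  have key : ∀ (s : Finset σ) (e : σ → ℕ),
      (∏ i ∈ s, (Polynomial.C (x i) + Polynomial.C (w i) * Polynomial.X) ^ e i).coeff
        (∑ i ∈ s, e i) = ∏ i ∈ s, w i ^ e i := by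
    intro s e
    classical
    induction s using Finset.induction_on with
    | empty => simp
    | insert _ _ hi ih =>
      rename_i j s
      rw [Finset.prod_insert hi, Finset.prod_insert hi, Finset.sum_insert hi]
      have h1 : ((Polynomial.C (x j) + Polynomial.C (w j) * Polynomial.X) ^ e j).natDegree ≤ e j :=
        Polynomial.natDegree_pow_le.trans (by simpa using Nat.mul_le_mul_left (e j) (hg j))
      have h2 : (∏ i ∈ s, (Polynomial.C (x i) + Polynomial.C (w i) * Polynomial.X) ^ e i).natDegree
          ≤ ∑ i ∈ s, e i := by
        refine (Polynomial.natDegree_prod_le _ _).trans ?_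
        apply Finset.sum_le_sum
        intro i _
        exact Polynomial.natDegree_pow_le.trans (by simpa using Nat.mul_le_mul_left (e i) (hg i))
      rw [Polynomial.coeff_mul_add_eq_of_natDegree_le h1 h2, ih]
      congr 1
      have := Polynomial.coeff_pow_of_natDegree_le (p := Polynomial.C (x j) + Polynomial.C (w j) * Polynomial.X) (n := 1) (m := e j) (hg j)
      rw [mul_one] at this
      rw [this, hg1 j]
  conv_lhs => rw [P.as_sum]
  conv_rhs => rw [P.as_sum]
  rw [map_sum, Polynomial.finset_sum_coeff, map_sum]
  apply Finset.sum_congr rfl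
  intro m hm
  rw [MvPolynomial.aeval_monomial, Polynomial.algebraMap_eq, MvPolynomial.eval_monomial,
    Finsupp.prod, Finsupp.prod, Polynomial.coeff_C_mul, ← aux_degsum hP hm, key]

open Polynomial in
private lemma aux_rootbound (f : Polynomial ℂ) (d : ℕ) (hd : f.natDegree ≤ d)
    (hr : ∀ t : ℂ, t.im ≠ 0 → f.eval t ≠ 0) (t0 : ℂ) (m : ℝ)
    (hm0 : 0 ≤ m) (hm1 : m ≤ 1) (hmt : m ≤ |t0.im|) :
    ‖f.coeff d‖ * m ^ d ≤ ‖f.eval t0‖ := by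
  rcases eq_or_ne f 0 with rfl | hf0
  · simp
  rcases lt_or_eq_of_le hd with hlt | hdeq
  · rw [Polynomial.coeff_eq_zero_of_natDegree_lt hlt]
    simp only [norm_zero, zero_mul]
    exact norm_nonneg _
  have hsplit : Polynomial.Splits f := IsAlgClosed.splits f
  have heq := hsplit.eq_prod_roots
  have hcoeff : f.coeff d = f.leadingCoeff := by rw [Polynomial.leadingCoeff, hdeq]
  have hroots_re : ∀ r ∈ f.roots, r.im = 0 := by
    intro r hr'
    by_contra h
    exact hr r h (Polynomial.isRoot_of_mem_roots hr')
  have hcard : (Multiset.card f.roots : ℕ) ≤ d := hdeq ▸ Polynomial.card_roots' f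
  have heval : ‖f.eval t0‖
      = ‖f.leadingCoeff‖ * (f.roots.map (fun r => ‖t0 - r‖)).prod := by
    conv_lhs => rw [heq]
    rw [Polynomial.eval_mul, Polynomial.eval_C, norm_mul, Polynomial.eval_multiset_prod,
      ← normHom_apply (Multiset.prod _), map_multiset_prod, Multiset.map_map, Multiset.map_map]
    congr 1
    exact congrArg Multiset.prod (Multiset.map_congr rfl fun r _ => by
      simp [Function.comp_def])
  rw [heval, hcoeff]
  apply mul_le_mul_of_nonneg_left _ (norm_nonneg _)
  calc m ^ d ≤ m ^ (Multiset.card f.roots) := pow_le_pow_of_le_one hm0 hm1 hcard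
    _ = ((f.roots.map (fun _ => m)).prod) := by
        rw [Multiset.map_const', Multiset.prod_replicate]
    _ ≤ (f.roots.map (fun r => ‖t0 - r‖)).prod := by
        apply Multiset.prod_map_le_prod_map₀
        · intro i _; exact hm0
        · intro r hr'
          refine hmt.trans ?_
          have : |(t0 - r).im| = |t0.im| := by
            rw [Complex.sub_im, hroots_re r hr', sub_zero]
          rw [← this]
          exact Complex.abs_im_le_norm _

/-- Let `p ∈ ℝ[x_0,x_1,...,x_n]` be a homogeneous real stable polynomial (it does not vanish
whenever all coordinates have strictly positive imaginary part) such that `p(u) ≠ 0` for the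
first unit vector `u = (1,0,...,0)`. Then the dehomogenization `q(x_1,...,x_n) = p(1,x_1,...,x_n)`
is a real zero polynomial (for every `a ∈ ℝ^n` and `λ ∈ ℂ`, `q(λa) = 0` implies `λ ∈ ℝ`). -/
theorem stmt12 (n d : ℕ) (p : MvPolynomial (Fin (n + 1)) ℝ)
    (hhom : p.IsHomogeneous d)
    (hstable : p = 0 ∨ ∀ z : Fin (n + 1) → ℂ, (∀ i, 0 < (z i).im) →
      MvPolynomial.eval z (MvPolynomial.map (algebraMap ℝ ℂ) p) ≠ 0)
    (hu : MvPolynomial.eval (Fin.cons 1 (fun _ => 0) : Fin (n + 1) → ℝ) p ≠ 0) :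
    ∀ a : Fin n → ℝ, ∀ z : ℂ,
      MvPolynomial.eval (Fin.cons (1 : ℂ) (fun i => z * (a i : ℂ)))
        (MvPolynomial.map (algebraMap ℝ ℂ) p) = 0 → z.im = 0 := by
  intro a z h0
  by_contra hz
  set P : MvPolynomial (Fin (n + 1)) ℂ := MvPolynomial.map (algebraMap ℝ ℂ) p with hPdef
  have hP : P.IsHomogeneous d := hhom.map _
  have hp0 : p ≠ 0 := by
    intro h
    exact hu (by simp [h])
  have hstable' : ∀ w : Fin (n + 1) → ℂ, (∀ i, 0 < (w i).im) →
      MvPolynomial.eval w P ≠ 0 := hstable.resolve_left hp0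
  have hz0 : z ≠ 0 := by
    intro h
    exact hz (by simp [h])
  set t0 : ℂ := z⁻¹ with ht0def
  have ht0 : t0.im ≠ 0 := by
    rw [ht0def, Complex.inv_im]
    have : Complex.normSq z ≠ 0 := by simpa using hz0
    intro h
    rcases div_eq_zero_iff.mp h with h' | h'
    · exact hz (by linarith [neg_eq_zero.mp h'])
    · exact this h'
  -- the dehomogenized zero
  have E0 : MvPolynomial.eval (Fin.cons t0 (fun i => (a i : ℂ))) P = 0 := by
    have := aux_eval_smul P hP z⁻¹ (Fin.cons (1 : ℂ) (fun i => z * (a i : ℂ)))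
    rw [h0, mul_zero] at this
    have hfun : (fun i : Fin (n+1) => z⁻¹ * (Fin.cons (1 : ℂ) (fun i => z * (a i : ℂ)) : Fin (n+1) → ℂ) i)
        = Fin.cons t0 (fun i => (a i : ℂ)) := by
      funext i
      induction i using Fin.cases with
      | zero => simp [ht0def]
      | succ j =>
        simp only [Fin.cons_succ]
        rw [← mul_assoc, inv_mul_cancel₀ hz0, one_mul]
    rw [← hfun]
    exact this
  -- real data
  set xr : Fin (n + 1) → ℝ := Fin.cons 0 a with hxrdef
  set vr : Fin (n + 1) → ℝ := Fin.cons 1 0 with hvrdef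
  -- the family of univariate polynomials
  set F : ℝ → Polynomial ℂ := fun μ =>
    MvPolynomial.aeval
      (fun i => Polynomial.C ((xr i : ℂ)) + Polynomial.C (((vr i + μ : ℝ) : ℂ)) * Polynomial.X) P
    with hFdef
  have hev : ∀ (μ : ℝ) (t : ℂ), (F μ).eval t
      = MvPolynomial.eval (fun i => (xr i : ℂ) + ((vr i + μ : ℝ) : ℂ) * t) P := by
    intro μ t
    rw [hFdef]
    rw [aux_eval_aeval]
    simp
  -- stability: for μ > 0, F μ has no roots off the real axis
  have hst : ∀ μ : ℝ, 0 < μ → ∀ t : ℂ, t.im ≠ 0 → (F μ).eval t ≠ 0 := by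
    intro μ hμ t ht
    have hup : ∀ s : ℂ, 0 < s.im →
        MvPolynomial.eval (fun i => (xr i : ℂ) + ((vr i + μ : ℝ) : ℂ) * s) P ≠ 0 := by
      intro s hs
      apply hstable'
      intro i
      have hw : 0 < vr i + μ := by
        have : 0 ≤ vr i := by
          induction i using Fin.cases with
          | zero => simp [hvrdef]
          | succ j => simp [hvrdef]
        linarith
      simp only [Complex.add_im, Complex.ofReal_im, Complex.mul_im, Complex.ofReal_re, zero_add,
        zero_mul, add_zero]
      positivity
    rw [hev]
    rcases lt_or_gt_of_ne ht with hneg | hpos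
    · -- conjugate
      set u : Fin (n + 1) → ℂ := fun i => (xr i : ℂ) + ((vr i + μ : ℝ) : ℂ) * (starRingEnd ℂ t)
        with hudef
      have hconj : (fun i => (starRingEnd ℂ) (u i))
          = fun i => (xr i : ℂ) + ((vr i + μ : ℝ) : ℂ) * t := by
        funext i
        simp [hudef, map_add, map_mul, Complex.conj_ofReal]
      have hu' : MvPolynomial.eval u P ≠ 0 := by
        apply hup
        simp [Complex.conj_im]
        linarith
      have hcj := aux_conj p u
      rw [← hPdef] at hcj
      rw [← hconj, hcj]
      simpa [-MvPolynomial.eval_map] using hu'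
    · exact hup t hpos
  -- leading coefficient
  have hcf : ∀ μ : ℝ, (F μ).coeff d
      = MvPolynomial.eval (fun i => ((vr i + μ : ℝ) : ℂ)) P := by
    intro μ
    rw [hFdef, aux_coeff_top P hP]
  have hnd : ∀ μ : ℝ, (F μ).natDegree ≤ d := by
    intro μ
    rw [hFdef]
    apply aux_natdeg P hP
    intro i
    exact (Polynomial.natDegree_add_le _ _).trans
      (max_le (by simp) ((Polynomial.natDegree_C_mul_le _ _).trans Polynomial.natDegree_X_le))
  set m : ℝ := min |t0.im| 1 with hmdef
  have hm0 : 0 < m := by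
    apply lt_min _ one_pos
    exact abs_pos.mpr ht0
  -- the key inequality for μ > 0
  have hkey : ∀ μ : ℝ, 0 < μ →
      ‖MvPolynomial.eval (fun i => ((vr i + μ : ℝ) : ℂ)) P‖ * m ^ d
        ≤ ‖(F μ).eval t0‖ := by
    intro μ hμ
    rw [← hcf μ]
    exact aux_rootbound (F μ) d (hnd μ) (hst μ hμ) t0 m hm0.le (min_le_right _ _)
      (min_le_left _ _)
  -- limits as μ → 0⁺
  have hcontP : Continuous fun w : Fin (n + 1) → ℂ => MvPolynomial.eval w P :=
    MvPolynomial.continuous_eval P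
  have hcont1 : Continuous fun μ : ℝ =>
      MvPolynomial.eval (fun i => (xr i : ℂ) + ((vr i + μ : ℝ) : ℂ) * t0) P := by
    apply hcontP.comp
    apply continuous_pi
    intro i
    exact continuous_const.add
      ((Complex.continuous_ofReal.comp (continuous_const.add continuous_id)).mul continuous_const)
  have hcont2 : Continuous fun μ : ℝ =>
      MvPolynomial.eval (fun i => ((vr i + μ : ℝ) : ℂ)) P := by
    apply hcontP.comp
    apply continuous_pi
    intro i
    exact Complex.continuous_ofReal.comp (continuous_const.add continuous_id)
  have hΦ0 : MvPolynomial.eval (fun i => (xr i : ℂ) + ((vr i + (0:ℝ) : ℝ) : ℂ) * t0) P = 0 := by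
    have hfun2 : (fun i => (xr i : ℂ) + ((vr i + (0:ℝ) : ℝ) : ℂ) * t0)
        = Fin.cons t0 (fun i => (a i : ℂ)) := by
      funext i
      induction i using Fin.cases with
      | zero => simp [hxrdef, hvrdef]
      | succ j => simp [hxrdef, hvrdef]
    rw [hfun2]
    exact E0
  have hΧ0 : MvPolynomial.eval (fun i => ((vr i + (0:ℝ) : ℝ) : ℂ)) P ≠ 0 := by
    have : (fun i => ((vr i + (0:ℝ) : ℝ) : ℂ)) = fun i => ((vr i : ℝ) : ℂ) := by
      funext i; simp
    rw [this, hPdef, aux_real]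
    simpa [hvrdef, Pi.zero_def] using hu
  -- put it together
  have hlim1 : Filter.Tendsto
      (fun μ : ℝ => ‖(F μ).eval t0‖) (nhdsWithin 0 (Set.Ioi 0)) (nhds 0) := by
    have : Filter.Tendsto
        (fun μ : ℝ => ‖
          MvPolynomial.eval (fun i => (xr i : ℂ) + ((vr i + μ : ℝ) : ℂ) * t0) P‖)
        (nhdsWithin 0 (Set.Ioi 0)) (nhds 0) := by
      have := (continuous_norm.comp hcont1).tendsto 0
      rw [Function.comp] at this
      simp only [Function.comp_def, hΦ0, norm_zero] at this
      exact this.mono_left nhdsWithin_le_nhds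
    refine this.congr ?_
    intro μ
    rw [hev]
  have hlim2 : Filter.Tendsto
      (fun μ : ℝ => ‖MvPolynomial.eval (fun i => ((vr i + μ : ℝ) : ℂ)) P‖ * m ^ d)
      (nhdsWithin 0 (Set.Ioi 0))
      (nhds (‖MvPolynomial.eval (fun i => ((vr i + (0:ℝ) : ℝ) : ℂ)) P‖ * m ^ d)) := by
    have hc : Continuous fun μ : ℝ =>
        ‖MvPolynomial.eval (fun i => ((vr i + μ : ℝ) : ℂ)) P‖ * m ^ d :=
      (continuous_norm.comp hcont2).mul continuous_const
    exact (hc.tendsto 0).mono_left nhdsWithin_le_nhds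
  have hle : ‖MvPolynomial.eval (fun i => ((vr i + (0:ℝ) : ℝ) : ℂ)) P‖ * m ^ d ≤ 0 := by
    refine le_of_tendsto_of_tendsto hlim2 hlim1 ?_
    filter_upwards [self_mem_nhdsWithin] with μ hμ
    exact hkey μ hμ
  have hpos : 0 < ‖MvPolynomial.eval (fun i => ((vr i + (0:ℝ) : ℝ) : ℂ)) P‖ * m ^ d := by
    apply mul_pos
    · exact (norm_pos_iff.mpr hΧ0)
    · positivity
  linarith
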